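/- arXiv:2111.07606 — 3 statements merged into one kernel-verified Lean document; each statement's English description precedes it below -/
import Mathlib

section
/- Let p and q be probability density functions on a measurable space with q > 0 wherever p > 0, and let γ > 0. For any measurable positive function D, define J_γ(D) = γ·∫ p(x) log D(x) dx − ∫ q(x) D(x)^γ dx. Then D_KL(p‖q) ≥ J_γ(D) + 1 for every such D (assuming all integrals are finite). -/
open MeasureTheory

/-- γ-DIME variational lower bound on the KL divergence (Lemma 1):
for probability densities `p, q` with `q > 0` wherever `p > 0`, `γ > 0`, and any
measurable positive `D` with finite integrals,
`D_KL(p‖q) ≥ γ ∫ p log D - ∫ q D^γ + 1`. -/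
theorem gammaDIME_lower_bound {X : Type*} [MeasurableSpace X] (μ : Measure X)
    (p q D : X → ℝ) (γ : ℝ) (hγ : 0 < γ)
    (hmp : Measurable p) (hmq : Measurable q) (hmD : Measurable D)
    (hp : ∀ x, 0 ≤ p x) (hq : ∀ x, 0 ≤ q x)
    (hpq : ∀ x, 0 < p x → 0 < q x)
    (hp1 : ∫ x, p x ∂μ = 1) (hq1 : ∫ x, q x ∂μ = 1)
    (hD : ∀ x, 0 < D x)
    (hint1 : Integrable (fun x => p x * Real.log (p x / q x)) μ)
    (hint2 : Integrable (fun x => p x * Real.log (D x)) μ)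
    (hint3 : Integrable (fun x => q x * D x ^ γ) μ) :
    γ * (∫ x, p x * Real.log (D x) ∂μ) - (∫ x, q x * D x ^ γ ∂μ) + 1 ≤
      ∫ x, p x * Real.log (p x / q x) ∂μ := by
  have hpint : Integrable p μ := by
    by_contra h
    rw [integral_undef h] at hp1
    norm_num at hp1
  -- pointwise inequality
  have key : ∀ x, p x - q x * D x ^ γ ≤
      p x * Real.log (p x / q x) - γ * (p x * Real.log (D x)) := by
    intro x
    rcases eq_or_lt_of_le (hp x) with h0 | h0
    · have : 0 ≤ q x * D x ^ γ :=
        mul_nonneg (hq x) (Real.rpow_nonneg (le_of_lt (hD x)) γ)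
      simp [← h0]
      linarith
    · have hqx := hpq x h0
      have hDx := hD x
      have hDγ : 0 < D x ^ γ := Real.rpow_pos_of_pos hDx γ
      have hm : 0 < q x * D x ^ γ := mul_pos hqx hDγ
      -- log t ≤ t - 1 with t = (q D^γ) / p
      have hlog : Real.log ((q x * D x ^ γ) / p x) ≤ (q x * D x ^ γ) / p x - 1 :=
        Real.log_le_sub_one_of_pos (div_pos hm h0)
      have hexp : Real.log ((q x * D x ^ γ) / p x)
          = Real.log (q x) + γ * Real.log (D x) - Real.log (p x) := by
        rw [Real.log_div (ne_of_gt hm) (ne_of_gt h0),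
          Real.log_mul (ne_of_gt hqx) (ne_of_gt hDγ),
          Real.log_rpow hDx]
      have hlpq : Real.log (p x / q x) = Real.log (p x) - Real.log (q x) :=
        Real.log_div (ne_of_gt h0) (ne_of_gt hqx)
      have := mul_le_mul_of_nonneg_left hlog (le_of_lt h0)
      rw [hexp] at this
      have hdiv : p x * ((q x * D x ^ γ) / p x - 1) = q x * D x ^ γ - p x := by
        field_simp
      rw [hdiv] at this
      rw [hlpq]
      nlinarith
  have hglhs : Integrable (fun x => p x - q x * D x ^ γ) μ := hpint.sub hint3
  have hgrhs : Integrable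
      (fun x => p x * Real.log (p x / q x) - γ * (p x * Real.log (D x))) μ :=
    hint1.sub (hint2.const_mul γ)
  have hmono := integral_mono hglhs hgrhs key
  rw [integral_sub hpint hint3, integral_sub hint1 (hint2.const_mul γ),
    integral_const_mul, hp1] at hmono
  linarith
end

section
/- Let p and q be probability densities with q > 0 wherever p > 0, and γ > 0. The function D*(x) = (p(x)/q(x))^{1/γ} achieves equality in the γ-DIME bound: J_γ(D*) + 1 = D_KL(p‖q), where J_γ(D) = γ·∫ p log D − ∫ q D^γ. -/
open MeasureTheory

/-- The discriminator `D*(x) = (p x / q x) ^ (1/γ)` achieves equality in the γ-DIME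
bound: `J_γ(D*) + 1 = D_KL(p‖q)`. -/
theorem gammaDIME_optimal_discriminator {X : Type*} [MeasurableSpace X] (μ : Measure X)
    (p q : X → ℝ) (γ : ℝ) (hγ : 0 < γ)
    (hmp : Measurable p) (hmq : Measurable q)
    (hp : ∀ x, 0 ≤ p x) (hq : ∀ x, 0 ≤ q x)
    (hpq : ∀ x, 0 < p x → 0 < q x)
    (hp1 : ∫ x, p x ∂μ = 1) (hq1 : ∫ x, q x ∂μ = 1)
    (hint1 : Integrable (fun x => p x * Real.log (p x / q x)) μ)
    (hint2 : Integrable (fun x => p x * Real.log ((p x / q x) ^ (1 / γ))) μ)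
    (hint3 : Integrable (fun x => q x * ((p x / q x) ^ (1 / γ)) ^ γ) μ) :
    γ * (∫ x, p x * Real.log ((p x / q x) ^ (1 / γ)) ∂μ) -
        (∫ x, q x * ((p x / q x) ^ (1 / γ)) ^ γ ∂μ) + 1 =
      ∫ x, p x * Real.log (p x / q x) ∂μ := by
  have h1 : ∀ x, p x * Real.log ((p x / q x) ^ (1 / γ)) =
      (1 / γ) * (p x * Real.log (p x / q x)) := by
    intro x
    rcases eq_or_lt_of_le (hp x) with h | h
    · simp [← h]
    · have hqx := hpq x h
      rw [Real.log_rpow (div_pos h hqx)]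
      ring
  have h2 : ∀ x, q x * ((p x / q x) ^ (1 / γ)) ^ γ = p x := by
    intro x
    rw [← Real.rpow_mul (div_nonneg (hp x) (hq x)), one_div_mul_cancel hγ.ne',
      Real.rpow_one]
    rcases eq_or_lt_of_le (hq x) with h | h
    · have hpx : p x = 0 := by
        by_contra hc
        exact absurd (hpq x (lt_of_le_of_ne (hp x) (Ne.symm hc))) (by rw [← h]; simp)
      simp [← h, hpx]
    · field_simp
  have e1 : (∫ x, p x * Real.log ((p x / q x) ^ (1 / γ)) ∂μ) =
      (1 / γ) * ∫ x, p x * Real.log (p x / q x) ∂μ := by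
    rw [← integral_const_mul]
    exact integral_congr_ae (Filter.Eventually.of_forall h1)
  have e2 : (∫ x, q x * ((p x / q x) ^ (1 / γ)) ^ γ ∂μ) = 1 := by
    rw [integral_congr_ae (Filter.Eventually.of_forall h2)]
    exact hp1
  rw [e1, e2]
  field_simp
  ring
end

section
/- Let p and q be probability densities with q > 0 wherever p > 0, and α > 0. For any measurable positive function D with finite integrals, define J_α(D) = α·∫ p(x) log D(x) dx − ∫ q(x) D(x) dx. Then D_KL(p‖q) ≥ J_α(D)/α + 1 − log α, with equality for D*(x) = α·p(x)/q(x). -/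
open MeasureTheory

/-- d-DIME variational lower bound: `D_KL(p‖q) ≥ J_α(D)/α + 1 - log α`, with equality
for `D*(x) = α p x / q x`. -/
theorem dDIME_lower_bound {X : Type*} [MeasurableSpace X] (μ : Measure X)
    (p q : X → ℝ) (α : ℝ) (hα : 0 < α)
    (hmp : Measurable p) (hmq : Measurable q)
    (hp : ∀ x, 0 ≤ p x) (hq : ∀ x, 0 ≤ q x)
    (hpq : ∀ x, 0 < p x → 0 < q x)
    (hp1 : ∫ x, p x ∂μ = 1) (hq1 : ∫ x, q x ∂μ = 1)
    (hint1 : Integrable (fun x => p x * Real.log (p x / q x)) μ) :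
    (∀ D : X → ℝ, Measurable D → (∀ x, 0 < D x) →
      Integrable (fun x => p x * Real.log (D x)) μ →
      Integrable (fun x => q x * D x) μ →
      (α * (∫ x, p x * Real.log (D x) ∂μ) - (∫ x, q x * D x ∂μ)) / α + 1 - Real.log α ≤
        ∫ x, p x * Real.log (p x / q x) ∂μ) ∧
    (Integrable (fun x => p x * Real.log (α * p x / q x)) μ →
      Integrable (fun x => q x * (α * p x / q x)) μ →
      (α * (∫ x, p x * Real.log (α * p x / q x) ∂μ) -
          (∫ x, q x * (α * p x / q x) ∂μ)) / α + 1 - Real.log α =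
        ∫ x, p x * Real.log (p x / q x) ∂μ) := by
  have hip : Integrable p μ := by
    by_contra h
    rw [integral_undef h] at hp1
    exact one_ne_zero hp1.symm
  -- pointwise identity for the optimal discriminator
  have hkey : ∀ x, p x * Real.log (α * p x / q x)
      = p x * Real.log α + p x * Real.log (p x / q x) := by
    intro x
    rcases (hp x).eq_or_lt with h0 | h0
    · simp [← h0]
    · have hqx := hpq x h0
      rw [mul_div_assoc, Real.log_mul (ne_of_gt hα) (ne_of_gt (div_pos h0 hqx)), mul_add]
  have hqd : ∀ x, q x * (α * p x / q x) = α * p x := by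
    intro x
    rcases (hq x).eq_or_lt with h0 | h0
    · have hp0 : p x = 0 := by
        by_contra hne
        have := hpq x ((hp x).lt_of_ne (Ne.symm hne))
        rw [← h0] at this
        exact lt_irrefl 0 this
      simp [← h0, hp0]
    · field_simp
  constructor
  · intro D hD hDpos hintA hintB
    -- pointwise inequality
    have hpt : ∀ x, p x * Real.log (D x) - q x * D x / α
        ≤ p x * Real.log (p x / q x) + p x * Real.log α - p x := by
      intro x
      rcases (hp x).eq_or_lt with h0 | h0
      · have hnn : 0 ≤ q x * D x / α := div_nonneg (mul_nonneg (hq x) (hDpos x).le) hα.le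
        rw [← h0]
        simpa using neg_nonpos.2 hnn
      · have hqx := hpq x h0
        set t : ℝ := D x * q x / (α * p x) with ht_def
        have ht : 0 < t := div_pos (mul_pos (hDpos x) hqx) (mul_pos hα h0)
        have hlog : Real.log t ≤ t - 1 := Real.log_le_sub_one_of_pos ht
        have hDeq : D x = (α * p x / q x) * t := by
          rw [ht_def]; field_simp
        have hlogD : Real.log (D x)
            = Real.log α + Real.log (p x / q x) + Real.log t := by
          rw [hDeq, Real.log_mul (by positivity) (ne_of_gt ht), mul_div_assoc,
            Real.log_mul (ne_of_gt hα) (ne_of_gt (div_pos h0 hqx))]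
        have hpt' : p x * t = q x * D x / α := by
          rw [ht_def]; field_simp
        have hmul : p x * Real.log t ≤ p x * (t - 1) :=
          mul_le_mul_of_nonneg_left hlog h0.le
        rw [hlogD]
        nlinarith [hmul, hpt']
    have hL : Integrable (fun x => p x * Real.log (D x) - q x * D x / α) μ :=
      hintA.sub (hintB.div_const α)
    have hR : Integrable (fun x => p x * Real.log (p x / q x) + p x * Real.log α - p x) μ :=
      (hint1.add (hip.mul_const _)).sub hip
    have hmono := integral_mono hL hR hpt
    have eR : ∫ x, (p x * Real.log (p x / q x) + p x * Real.log α - p x) ∂μ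
        = (∫ x, p x * Real.log (p x / q x) ∂μ) + Real.log α - 1 := by
      have hAB : Integrable (fun x => p x * Real.log (p x / q x) + p x * Real.log α) μ :=
        hint1.add (hip.mul_const _)
      rw [integral_sub hAB hip,
        integral_add hint1 (hip.mul_const _), integral_mul_const, hp1, one_mul]
    rw [integral_sub hintA (hintB.div_const α), integral_div, eR] at hmono
    have hrw : (α * (∫ x, p x * Real.log (D x) ∂μ) - (∫ x, q x * D x ∂μ)) / α
        = (∫ x, p x * Real.log (D x) ∂μ) - (∫ x, q x * D x ∂μ) / α := by
      field_simp
    rw [hrw]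
    linarith
  · intro h1 h2
    have e1 : ∫ x, p x * Real.log (α * p x / q x) ∂μ
        = Real.log α + ∫ x, p x * Real.log (p x / q x) ∂μ := by
      calc ∫ x, p x * Real.log (α * p x / q x) ∂μ
          = ∫ x, (p x * Real.log α + p x * Real.log (p x / q x)) ∂μ := by
            exact integral_congr_ae (Filter.Eventually.of_forall hkey)
        _ = (∫ x, p x * Real.log α ∂μ) + ∫ x, p x * Real.log (p x / q x) ∂μ := by
            exact integral_add (hip.mul_const _) hint1
        _ = Real.log α + ∫ x, p x * Real.log (p x / q x) ∂μ := by
            rw [integral_mul_const, hp1, one_mul]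
    have e2 : ∫ x, q x * (α * p x / q x) ∂μ = α := by
      calc ∫ x, q x * (α * p x / q x) ∂μ = ∫ x, α * p x ∂μ := by
            exact integral_congr_ae (Filter.Eventually.of_forall hqd)
        _ = α := by rw [integral_const_mul, hp1, mul_one]
    rw [e1, e2]
    field_simp
    ring
end
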